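/- A pair of vectors (x, y) in R^d achieves the minimum value d - 1 of ‖I - x yᵀ x yᵀ‖_F² if and only if x = c·y for some real c and ‖x‖·‖y‖ = 1. -/

import Mathlib

open Finset

lemma key_sum {d : ℕ} (x y : Fin d → ℝ) (s : ℝ) :
    ∑ i : Fin d, ∑ j : Fin d, ((if i = j then (1:ℝ) else 0) - s * (x i * y j)) ^ 2
      = (d : ℝ) - 2 * s * (∑ k, x k * y k) + s ^ 2 * (∑ k, x k ^ 2) * (∑ k, y k ^ 2) := by
  have h : ∀ i j : Fin d, ((if i = j then (1:ℝ) else 0) - s * (x i * y j)) ^ 2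
      = (if i = j then (1 - 2 * s * (x i * y j)) else 0) + s ^ 2 * x i ^ 2 * y j ^ 2 := by
    intro i j; split <;> ring
  simp only [h, Finset.sum_add_distrib, Finset.sum_ite_eq, Finset.mem_univ, if_true]
  have h2 : ∑ i : Fin d, ∑ j : Fin d, s ^ 2 * x i ^ 2 * y j ^ 2
      = s ^ 2 * (∑ k, x k ^ 2) * (∑ k, y k ^ 2) := by
    simp_rw [← Finset.mul_sum, ← Finset.sum_mul, ← Finset.mul_sum]
  rw [h2, Finset.sum_sub_distrib, Finset.sum_const, Finset.card_univ, Fintype.card_fin,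
    nsmul_eq_mul, mul_one, ← Finset.mul_sum]

lemma entry_eq {d : ℕ} (x y : Fin d → ℝ) (i j : Fin d) :
    ((1 : Matrix (Fin d) (Fin d) ℝ) -
        Matrix.vecMulVec x y * Matrix.vecMulVec x y) i j
      = (if i = j then (1:ℝ) else 0) - (∑ k, x k * y k) * (x i * y j) := by
  simp only [Matrix.sub_apply, Matrix.one_apply, Matrix.mul_apply,
    Matrix.vecMulVec_apply]
  congr 1
  rw [Finset.sum_mul]
  exact Finset.sum_congr rfl fun k _ => by ring

/-- `(x, y)` achieves the minimum value `d - 1` of `‖I - x yᵀ x yᵀ‖_F²` iff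
`x = c • y` for some real `c` and `‖x‖ ‖y‖ = 1`. -/
theorem frobenius_min_iff (d : ℕ) (x y : Fin d → ℝ) :
    (∑ i, ∑ j, ((1 : Matrix (Fin d) (Fin d) ℝ) -
        Matrix.vecMulVec x y * Matrix.vecMulVec x y) i j ^ 2) = (d : ℝ) - 1
      ↔ (∃ c : ℝ, x = c • y) ∧
        Real.sqrt (∑ i, x i ^ 2) * Real.sqrt (∑ i, y i ^ 2) = 1 := by
  have key : (∑ i, ∑ j, ((1 : Matrix (Fin d) (Fin d) ℝ) -
        Matrix.vecMulVec x y * Matrix.vecMulVec x y) i j ^ 2)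
      = (d : ℝ) - 2 * (∑ k, x k * y k) * (∑ k, x k * y k)
        + (∑ k, x k * y k) ^ 2 * (∑ k, x k ^ 2) * (∑ k, y k ^ 2) := by
    simp only [entry_eq]
    exact key_sum x y _
  rw [key]
  have hs : True := trivial
  generalize hS : (∑ k : Fin d, x k * y k) = s at *
  have hXnn : (0:ℝ) ≤ ∑ i, x i ^ 2 := Finset.sum_nonneg fun i _ => sq_nonneg _
  have hYnn : (0:ℝ) ≤ ∑ i, y i ^ 2 := Finset.sum_nonneg fun i _ => sq_nonneg _
  have hCS : s ^ 2 ≤ (∑ i, x i ^ 2) * (∑ i, y i ^ 2) := by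
    rw [← hS]; exact Finset.sum_mul_sq_le_sq_mul_sq _ x y
  set X : ℝ := ∑ i, x i ^ 2 with hX
  set Y : ℝ := ∑ i, y i ^ 2 with hY
  constructor
  · intro h
    have hs1 : s ^ 2 = 1 := by
      nlinarith [sq_nonneg (s ^ 2 - 1), mul_nonneg (sq_nonneg s) (sub_nonneg.2 hCS)]
    have hXY : X * Y = 1 := by nlinarith
    have hYpos : 0 < Y := by
      rcases hYnn.lt_or_eq with h' | h'
      · exact h'
      · exfalso; nlinarith
    refine ⟨⟨s / Y, ?_⟩, ?_⟩
    · have hsum : ∑ i, (x i - (s / Y) * y i) ^ 2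
          = X - 2 * (s / Y) * s + (s / Y) ^ 2 * Y := by
        have expand : ∀ i : Fin d, (x i - (s / Y) * y i) ^ 2
            = x i ^ 2 - 2 * (s / Y) * (x i * y i) + (s / Y) ^ 2 * y i ^ 2 := by
          intro i; ring
        simp only [expand, Finset.sum_add_distrib, Finset.sum_sub_distrib,
          ← Finset.mul_sum, hS]
        rfl
      have hz : ∑ i, (x i - (s / Y) * y i) ^ 2 = 0 := by
        rw [hsum]; field_simp; nlinarith
      funext i
      have h0 := (Finset.sum_eq_zero_iff_of_nonneg (fun i _ => sq_nonneg
        (x i - (s / Y) * y i))).1 hz i (Finset.mem_univ i)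
      have hxi : x i - (s / Y) * y i = 0 :=
        pow_eq_zero_iff (n := 2) (by norm_num) |>.1 h0
      simp only [Pi.smul_apply, smul_eq_mul]
      linarith
    · rw [← Real.sqrt_mul hXnn, hXY, Real.sqrt_one]
  · rintro ⟨⟨c, rfl⟩, hnorm⟩
    have hXY : X * Y = 1 := by
      have := congrArg (· ^ 2) hnorm
      simpa [← Real.sqrt_mul hXnn, Real.sq_sqrt (mul_nonneg hXnn hYnn)] using this
    have hXc : X = c ^ 2 * Y := by
      rw [hX, hY, Finset.mul_sum]
      refine Finset.sum_congr rfl fun i _ => ?_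
      simp only [Pi.smul_apply, smul_eq_mul]; ring
    have hsc : s = c * Y := by
      rw [← hS, hY, Finset.mul_sum]
      refine Finset.sum_congr rfl fun i _ => ?_
      simp only [Pi.smul_apply, smul_eq_mul]; ring
    have hs1 : s ^ 2 = 1 := by rw [hsc]; nlinarith
    nlinarith
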